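/- For 0 < q < 1, the limiting subdifferential of t ↦ |t|^q on ℝ is {q|t|^{q-1} sign(t)} if t ≠ 0, and is all of ℝ if t = 0. -/

import Mathlib

open Filter Topology

noncomputable section

/-- The regular (Fréchet) subdifferential of a real function on ℝ (ε-δ form). -/
def regSubdiffR (φ : ℝ → ℝ) (t : ℝ) : Set ℝ :=
  {s | ∀ ε > (0 : ℝ), ∃ δ > (0 : ℝ), ∀ u, |u - t| < δ →
      φ t + s * (u - t) - ε * |u - t| ≤ φ u}

/-- The limiting (Mordukhovich) subdifferential of a real function on ℝ. -/
def limSubdiffR (φ : ℝ → ℝ) (t : ℝ) : Set ℝ :=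
  {s | ∃ (tk : ℕ → ℝ) (sk : ℕ → ℝ), Tendsto tk atTop (𝓝 t) ∧ Tendsto sk atTop (𝓝 s) ∧
      (∀ k, sk k ∈ regSubdiffR φ (tk k)) ∧ Tendsto (fun k => φ (tk k)) atTop (𝓝 (φ t))}

lemma hasDerivAt_absrpow (q : ℝ) {t : ℝ} (ht : t ≠ 0) :
    HasDerivAt (fun u => |u| ^ q) (q * |t| ^ (q - 1) * Real.sign t) t := by
  rcases ht.lt_or_gt with ht' | ht'
  · have h : HasDerivAt (fun u : ℝ => (-u) ^ q) (q * (-t) ^ (q - 1) * (-1)) t := by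
      have h1 := Real.hasDerivAt_rpow_const (x := -t) (p := q) (Or.inl (by linarith))
      have h2 : HasDerivAt (fun u : ℝ => -u) (-1) t := (hasDerivAt_id t).neg
      simpa [Function.comp_def] using h1.comp t h2
    have heq : (fun u : ℝ => |u| ^ q) =ᶠ[𝓝 t] fun u => (-u) ^ q := by
      filter_upwards [eventually_lt_nhds ht'] with u hu
      rw [abs_of_neg hu]
    have := h.congr_of_eventuallyEq heq
    simpa [abs_of_neg ht', Real.sign_of_neg ht'] using this
  · have h := Real.hasDerivAt_rpow_const (x := t) (p := q) (Or.inl ht)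
    have heq : (fun u : ℝ => |u| ^ q) =ᶠ[𝓝 t] fun u => u ^ q := by
      filter_upwards [eventually_gt_nhds ht'] with u hu
      rw [abs_of_pos hu]
    have := h.congr_of_eventuallyEq heq
    simpa [abs_of_pos ht', Real.sign_of_pos ht'] using this

lemma aux_littleO {φ : ℝ → ℝ} {d t : ℝ} (h : HasDerivAt φ d t) (ε : ℝ) (hε : 0 < ε) :
    ∃ δ > (0:ℝ), ∀ u, |u - t| < δ → |φ u - φ t - (u - t) * d| ≤ ε * |u - t| := by
  have h1 := (hasDerivAt_iff_isLittleO.mp h).def hε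
  rw [Metric.eventually_nhds_iff] at h1
  obtain ⟨δ, hδ, hδ'⟩ := h1
  refine ⟨δ, hδ, fun u hu => ?_⟩
  have := hδ' (y := u) (by simpa [Real.dist_eq] using hu)
  simpa [Real.norm_eq_abs, smul_eq_mul] using this

lemma mem_reg_of_deriv {φ : ℝ → ℝ} {d t : ℝ} (h : HasDerivAt φ d t) : d ∈ regSubdiffR φ t := by
  intro ε hε
  obtain ⟨δ, hδ, hδ'⟩ := aux_littleO h ε hε
  refine ⟨δ, hδ, fun u hu => ?_⟩
  have := abs_le.mp (hδ' u hu)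
  nlinarith [this.1]

lemma eq_of_mem_reg {φ : ℝ → ℝ} {s d t : ℝ} (hs : s ∈ regSubdiffR φ t)
    (h : HasDerivAt φ d t) : s = d := by
  by_contra hne
  have hsd : 0 < |s - d| := abs_pos.mpr (sub_ne_zero.mpr hne)
  obtain ⟨δ₁, hδ₁, h1⟩ := hs (|s - d| / 4) (by linarith)
  obtain ⟨δ₂, hδ₂, h2⟩ := aux_littleO h (|s - d| / 4) (by linarith)
  set r := min δ₁ δ₂ / 2 with hr
  have hr0 : 0 < r := by positivity
  set u := t + r * Real.sign (s - d) with hu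
  have hut : u - t = r * Real.sign (s - d) := by rw [hu]; ring
  have hsign : (s - d) * Real.sign (s - d) = |s - d| ∧ |Real.sign (s - d)| = 1 := by
    rcases (sub_ne_zero.mpr hne).lt_or_gt with hlt | hlt
    · rw [Real.sign_of_neg hlt, abs_of_neg hlt]; constructor <;> simp
    · rw [Real.sign_of_pos hlt, abs_of_pos hlt]; constructor <;> simp
  have habs : |u - t| = r := by
    rw [hut, abs_mul, hsign.2, abs_of_pos hr0, mul_one]
  have hlt1 : |u - t| < δ₁ := by
    rw [habs]
    calc r = min δ₁ δ₂ / 2 := hr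
    _ < min δ₁ δ₂ := by linarith [lt_min hδ₁ hδ₂]
    _ ≤ δ₁ := min_le_left _ _
  have hlt2 : |u - t| < δ₂ := by
    rw [habs]
    calc r = min δ₁ δ₂ / 2 := hr
    _ < min δ₁ δ₂ := by linarith [lt_min hδ₁ hδ₂]
    _ ≤ δ₂ := min_le_right _ _
  have e1 := h1 u hlt1
  have e2 := (abs_le.mp (h2 u hlt2)).2
  rw [habs] at e1 e2
  have hkey : (s - d) * (u - t) = r * |s - d| := by
    rw [hut, ← mul_assoc, mul_comm (s-d) r, mul_assoc, hsign.1]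
  nlinarith [hkey, e1, e2, mul_pos hr0 hsd]

lemma reg_zero (q : ℝ) (hq0 : 0 < q) (hq1 : q < 1) (s : ℝ) :
    s ∈ regSubdiffR (fun u => |u| ^ q) 0 := by
  intro ε hε
  set c := |s| + 1 with hc
  have hc0 : (0:ℝ) < c := by positivity
  refine ⟨c ^ (-(1 - q)⁻¹), Real.rpow_pos_of_pos hc0 _, fun u hu => ?_⟩
  simp only [sub_zero] at hu ⊢
  rw [abs_zero, Real.zero_rpow hq0.ne']
  rcases eq_or_ne u 0 with rfl | hu0
  · simp [Real.zero_rpow hq0.ne']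
  · have hau : 0 < |u| := abs_pos.mpr hu0
    have h1q : (0:ℝ) < 1 - q := by linarith
    have key : c * |u| ≤ |u| ^ q := by
      have h2 : |u| ^ (1 - q) < (c ^ (-(1 - q)⁻¹)) ^ (1 - q) :=
        Real.rpow_lt_rpow (abs_nonneg u) hu h1q
      have h3 : (c ^ (-(1 - q)⁻¹)) ^ (1 - q) = c⁻¹ := by
        rw [← Real.rpow_mul hc0.le]
        rw [neg_mul, inv_mul_cancel₀ h1q.ne', Real.rpow_neg_one]
      rw [h3] at h2
      have h4 : c * |u| ^ (1 - q) < 1 := by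
        calc c * |u| ^ (1 - q) < c * c⁻¹ := (mul_lt_mul_iff_right₀ hc0).mpr h2
        _ = 1 := mul_inv_cancel₀ hc0.ne'
      have h5 : |u| = |u| ^ (1 - q) * |u| ^ q := by
        rw [← Real.rpow_add hau]; norm_num
      have hq' : (0:ℝ) < |u| ^ q := Real.rpow_pos_of_pos hau q
      have h6 : c * |u| ^ (1 - q) * |u| ^ q ≤ |u| ^ q := by nlinarith
      calc c * |u| = c * (|u| ^ (1 - q) * |u| ^ q) := by rw [← h5]
      _ ≤ |u| ^ q := by rw [← mul_assoc]; exact h6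
    have : s * u ≤ |s| * |u| := le_trans (le_abs_self _) (by rw [abs_mul])
    nlinarith [abs_nonneg u, hε, abs_nonneg s]

/-- The limiting subdifferential of t ↦ |t|^q for 0 < q < 1. -/
theorem limSubdiff_abs_rpow (q : ℝ) (hq0 : 0 < q) (hq1 : q < 1) :
    (∀ t : ℝ, t ≠ 0 →
      limSubdiffR (fun u => |u| ^ q) t = {q * |t| ^ (q - 1) * Real.sign t}) ∧
    limSubdiffR (fun u => |u| ^ q) 0 = Set.univ := by
  constructor
  · intro t ht
    set g : ℝ → ℝ := fun u => q * |u| ^ (q - 1) * Real.sign u with hg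
    ext s
    simp only [Set.mem_singleton_iff]
    constructor
    · rintro ⟨tk, sk, htk, hsk, hreg, -⟩
      have hev : ∀ᶠ u in 𝓝 t, u ≠ 0 := eventually_ne_nhds ht
      have h1 : ∀ᶠ k in atTop, sk k = g (tk k) :=
        (htk.eventually hev).mono fun k hk =>
          eq_of_mem_reg (hreg k) (hasDerivAt_absrpow q hk)
      have hsignev : ∀ᶠ u in 𝓝 t, Real.sign u = Real.sign t := by
        rcases ht.lt_or_gt with ht' | ht'
        · filter_upwards [eventually_lt_nhds ht'] with u hu
          rw [Real.sign_of_neg hu, Real.sign_of_neg ht']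
        · filter_upwards [eventually_gt_nhds ht'] with u hu
          rw [Real.sign_of_pos hu, Real.sign_of_pos ht']
      have hcont : ContinuousAt (fun u => q * |u| ^ (q - 1) * Real.sign t) t :=
        (continuousAt_const.mul
          ((continuous_abs.continuousAt).rpow_const (Or.inl (abs_ne_zero.mpr ht)))).mul
          continuousAt_const
      have h2 : Tendsto (fun k => q * |tk k| ^ (q - 1) * Real.sign t) atTop (𝓝 (g t)) :=
        hcont.tendsto.comp htk
      have h3 : Tendsto (fun k => g (tk k)) atTop (𝓝 (g t)) := by
        refine h2.congr' ?_
        filter_upwards [htk.eventually hsignev] with k hk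
        rw [hg]; simp only; rw [hk]
      have h4 : Tendsto (fun k => g (tk k)) atTop (𝓝 s) := hsk.congr' h1
      exact tendsto_nhds_unique h4 h3
    · rintro rfl
      exact ⟨fun _ => t, fun _ => g t, tendsto_const_nhds, tendsto_const_nhds,
        fun k => mem_reg_of_deriv (hasDerivAt_absrpow q ht), tendsto_const_nhds⟩
  · ext s
    simp only [Set.mem_univ, iff_true]
    exact ⟨fun _ => 0, fun _ => s, tendsto_const_nhds, tendsto_const_nhds,
      fun k => reg_zero q hq0 hq1 s, tendsto_const_nhds⟩
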